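/- arXiv:2310.17307 — 8 statements merged into one kernel-verified Lean document; each statement's English description precedes it below -/
import Mathlib

section
/- For the Farlie-Gumbel-Morgenstern copula C_θ(u,v) = uv + θ·u·v·(1−u)·(1−v) with θ ∈ [−1,1], Chatterjee's xi coefficient equals ξ(C_θ) = 6·∫₀¹∫₀¹ (∂₁C_θ(u,v))² du dv − 2 = θ²/15. -/
open intervalIntegral

lemma integral_sq_linear (c d : ℝ) :
    ∫ u in (0:ℝ)..1, (c + d * u) ^ 2 = c ^ 2 + c * d + d ^ 2 / 3 := by
  have h : ∀ u ∈ Set.uIcc (0:ℝ) 1, HasDerivAt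
      (fun u : ℝ => c ^ 2 * u + c * d * u ^ 2 + d ^ 2 / 3 * u ^ 3)
      ((c + d * u) ^ 2) u := by
    intro u _
    have h1 := (((hasDerivAt_id u).const_mul (c ^ 2)).add
      ((hasDerivAt_pow 2 u).const_mul (c * d))).add
      ((hasDerivAt_pow 3 u).const_mul (d ^ 2 / 3))
    have he : c ^ 2 * 1 + c * d * (↑2 * u ^ (2 - 1)) + d ^ 2 / 3 * (↑3 * u ^ (3 - 1))
        = (c + d * u) ^ 2 := by push_cast; ring
    exact he ▸ h1
  rw [intervalIntegral.integral_eq_sub_of_hasDerivAt h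
    (((continuous_const.add (continuous_const.mul continuous_id)).pow 2).intervalIntegrable 0 1)]
  ring

lemma outer_integral (θ : ℝ) :
    ∫ v in (0:ℝ)..1, ((v + θ * v * (1 - v)) ^ 2
        + (v + θ * v * (1 - v)) * (-(2 * θ * v * (1 - v)))
        + (-(2 * θ * v * (1 - v))) ^ 2 / 3)
      = 1 / 3 + θ ^ 2 / 90 := by
  have h : ∀ v ∈ Set.uIcc (0:ℝ) 1, HasDerivAt
      (fun v : ℝ => (1 / 3 + θ ^ 2 / 9) * v ^ 3 + (-(θ ^ 2 / 6)) * v ^ 4 + θ ^ 2 / 15 * v ^ 5)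
      ((v + θ * v * (1 - v)) ^ 2
        + (v + θ * v * (1 - v)) * (-(2 * θ * v * (1 - v)))
        + (-(2 * θ * v * (1 - v))) ^ 2 / 3) v := by
    intro v _
    have h1 := (((hasDerivAt_pow 3 v).const_mul (1 / 3 + θ ^ 2 / 9)).add
      ((hasDerivAt_pow 4 v).const_mul (-(θ ^ 2 / 6)))).add
      ((hasDerivAt_pow 5 v).const_mul (θ ^ 2 / 15))
    have he : (1 / 3 + θ ^ 2 / 9) * (↑3 * v ^ (3 - 1)) + (-(θ ^ 2 / 6)) * (↑4 * v ^ (4 - 1))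
          + θ ^ 2 / 15 * (↑5 * v ^ (5 - 1))
        = (v + θ * v * (1 - v)) ^ 2
          + (v + θ * v * (1 - v)) * (-(2 * θ * v * (1 - v)))
          + (-(2 * θ * v * (1 - v))) ^ 2 / 3 := by push_cast; ring
    exact he ▸ h1
  rw [intervalIntegral.integral_eq_sub_of_hasDerivAt h ((Continuous.intervalIntegrable (by continuity) 0 1))]
  ring

theorem fgm_chatterjee_xi (θ : ℝ) (hθ : θ ∈ Set.Icc (-1:ℝ) 1) :
    6 * (∫ v in (0:ℝ)..1, ∫ u in (0:ℝ)..1,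
        (deriv (fun x : ℝ => x * v + θ * x * v * (1 - x) * (1 - v)) u) ^ 2) - 2
      = θ ^ 2 / 15 := by
  have hderiv : ∀ v u : ℝ,
      deriv (fun x : ℝ => x * v + θ * x * v * (1 - x) * (1 - v)) u
        = (v + θ * v * (1 - v)) + (-(2 * θ * v * (1 - v))) * u := by
    intro v u
    have hfun : (fun x : ℝ => x * v + θ * x * v * (1 - x) * (1 - v))
        = fun x : ℝ => (v + θ * v * (1 - v)) * x + (-(θ * v * (1 - v))) * x ^ 2 := by
      funext x; ring
    have h1 := ((hasDerivAt_id u).const_mul (v + θ * v * (1 - v))).add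
      ((hasDerivAt_pow 2 u).const_mul (-(θ * v * (1 - v))))
    simp only [id_eq] at h1
    rw [hfun, (by exact h1 : HasDerivAt (fun x : ℝ => (v + θ * v * (1 - v)) * x + (-(θ * v * (1 - v))) * x ^ 2) _ u).deriv]
    push_cast; ring
  have hinner : ∀ v : ℝ,
      (∫ u in (0:ℝ)..1,
        (deriv (fun x : ℝ => x * v + θ * x * v * (1 - x) * (1 - v)) u) ^ 2)
        = (v + θ * v * (1 - v)) ^ 2
          + (v + θ * v * (1 - v)) * (-(2 * θ * v * (1 - v)))
          + (-(2 * θ * v * (1 - v))) ^ 2 / 3 := by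
    intro v
    simp_rw [hderiv v]
    exact integral_sq_linear _ _
  simp_rw [hinner]
  rw [outer_integral]
  ring
end

section
/- For the Nelsen7 copula C_θ(u,v) = max(θuv + (1−θ)(u+v−1), 0) with θ ∈ (0,1), Chatterjee's xi coefficient equals ξ(C_θ) = 6·∫₀¹∫₀¹ (∂₁C_θ(u,v))² du dv − 2 = 1 − θ. -/
open MeasureTheory Set

lemma nelsen7_inner (θ v : ℝ) (hθ : θ ∈ Set.Ioo (0:ℝ) 1) (hv : v ∈ Set.Icc (0:ℝ) 1) :
    (∫ u in (0:ℝ)..1,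
        ((θ * v + 1 - θ) *
          (if 0 < θ * u * v + (1 - θ) * (u + v - 1) then (1:ℝ) else 0)) ^ 2)
      = θ * v ^ 2 + (1 - θ) * v := by
  obtain ⟨hθ0, hθ1⟩ := hθ
  obtain ⟨hv0, hv1⟩ := hv
  set a : ℝ := θ * v + 1 - θ with ha_def
  have ha : 0 < a := by nlinarith
  set c : ℝ := (1 - θ) * (1 - v) / a with hc_def
  have hc0 : 0 ≤ c := by
    apply div_nonneg _ ha.le
    nlinarith
  have hc1 : c ≤ 1 := by
    rw [hc_def, div_le_one ha]
    nlinarith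
  have hcond : ∀ u : ℝ, (0 < θ * u * v + (1 - θ) * (u + v - 1)) ↔ c < u := by
    intro u
    rw [hc_def, div_lt_iff₀ ha]
    constructor <;> intro h <;> nlinarith
  have hfun : (fun u : ℝ => ((θ * v + 1 - θ) *
          (if 0 < θ * u * v + (1 - θ) * (u + v - 1) then (1:ℝ) else 0)) ^ 2)
      = Set.indicator (Set.Ioi c) (fun _ => a ^ 2) := by
    funext u
    rw [Set.indicator_apply]
    simp only [Set.mem_Ioi, hcond u]
    split_ifs <;> ring
  rw [hfun, intervalIntegral.integral_of_le (by norm_num : (0:ℝ) ≤ 1),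
    MeasureTheory.integral_indicator measurableSet_Ioi]
  rw [MeasureTheory.Measure.restrict_restrict measurableSet_Ioi]
  have hset : Set.Ioi c ∩ Set.Ioc (0:ℝ) 1 = Set.Ioc c 1 := by
    ext x
    simp only [Set.mem_inter_iff, Set.mem_Ioi, Set.mem_Ioc]
    constructor
    · rintro ⟨h1, _, h3⟩; exact ⟨h1, h3⟩
    · rintro ⟨h1, h2⟩; exact ⟨h1, lt_of_le_of_lt hc0 h1, h2⟩
  rw [hset, MeasureTheory.setIntegral_const, Real.volume_real_Ioc_of_le hc1]
  rw [smul_eq_mul, hc_def]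
  field_simp
  ring

theorem nelsen7_chatterjee_xi (θ : ℝ) (hθ : θ ∈ Set.Ioo (0:ℝ) 1) :
    6 * (∫ v in (0:ℝ)..1, ∫ u in (0:ℝ)..1,
        ((θ * v + 1 - θ) *
          (if 0 < θ * u * v + (1 - θ) * (u + v - 1) then (1:ℝ) else 0)) ^ 2) - 2
      = 1 - θ := by
  have h1 : (∫ v in (0:ℝ)..1, ∫ u in (0:ℝ)..1,
        ((θ * v + 1 - θ) *
          (if 0 < θ * u * v + (1 - θ) * (u + v - 1) then (1:ℝ) else 0)) ^ 2)
      = ∫ v in (0:ℝ)..1, (θ * v ^ 2 + (1 - θ) * v) := by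
    apply intervalIntegral.integral_congr
    intro v hv
    rw [Set.uIcc_of_le (by norm_num : (0:ℝ) ≤ 1)] at hv
    exact nelsen7_inner θ v hθ hv
  rw [h1]
  have h2 : (∫ v in (0:ℝ)..1, (θ * v ^ 2 + (1 - θ) * v)) = θ / 3 + (1 - θ) / 2 := by
    rw [intervalIntegral.integral_add]
    · rw [intervalIntegral.integral_const_mul, intervalIntegral.integral_const_mul,
        integral_pow, integral_id]
      norm_num
      ring
    · exact (continuous_const.mul (continuous_pow 2)).intervalIntegrable 0 1
    · exact (continuous_const.mul continuous_id).intervalIntegrable 0 1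
  rw [h2]; ring
end

section
/- For the Cuadras-Augé copula C_δ(u,v) = min(u,v)^δ · (uv)^{1−δ} with δ ∈ [0,1], Chatterjee's xi coefficient equals ξ(C_δ) = 6·∫₀¹∫₀¹ (∂₁C_δ(u,v))² du dv − 2 = δ²/(2−δ). -/
open Real

open MeasureTheory intervalIntegral in
theorem cuadras_auge_chatterjee_xi (δ : ℝ) (hδ : δ ∈ Set.Icc (0:ℝ) 1) :
    6 * (∫ v in (0:ℝ)..1, ∫ u in (0:ℝ)..1,
        (deriv (fun x : ℝ => (min x v) ^ δ * (x * v) ^ (1 - δ)) u) ^ 2) - 2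
      = δ ^ 2 / (2 - δ) := by
  obtain ⟨hδ0, hδ1⟩ := hδ
  -- Inner integral formula for v ∈ (0,1)
  have inner : ∀ v ∈ Set.Ioo (0:ℝ) 1,
      (∫ u in (0:ℝ)..1, (deriv (fun x : ℝ => (min x v) ^ δ * (x * v) ^ (1 - δ)) u) ^ 2)
        = v ^ ((3:ℝ) - 2*δ) + (1-δ)^2 * v^2 * ∫ u in v..(1:ℝ), u ^ (-(2*δ)) := by
    intro v hv
    set f : ℝ → ℝ := fun x => (min x v) ^ δ * (x * v) ^ (1 - δ) with hf
    have hv0 := hv.1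
    have hne : ∀ᵐ (u : ℝ), u ≠ v := by
      have h : ({v} : Set ℝ)ᶜ ∈ ae (volume : Measure ℝ) :=
        compl_mem_ae_iff.2 (measure_singleton v)
      filter_upwards [h] with u hu; simpa using hu
    have dA : ∀ u ∈ Set.Ioo (0:ℝ) v, deriv f u = v ^ (1 - δ) := by
      intro u hu
      have heq : f =ᶠ[nhds u] fun x => x * v ^ (1 - δ) := by
        filter_upwards [Ioo_mem_nhds hu.1 hu.2] with x hx
        show (min x v) ^ δ * (x * v) ^ (1 - δ) = _
        rw [min_eq_left hx.2.le, Real.mul_rpow hx.1.le hv0.le, ← mul_assoc,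
          ← Real.rpow_add hx.1, show δ + (1 - δ) = 1 by ring, Real.rpow_one]
      rw [heq.deriv_eq]
      simp [((hasDerivAt_id u).mul_const (v ^ (1 - δ))).deriv]
    have dB : ∀ u : ℝ, v < u → deriv f u = v * ((1 - δ) * u ^ (1 - δ - 1)) := by
      intro u hu
      have heq : f =ᶠ[nhds u] fun x => v * x ^ (1 - δ) := by
        filter_upwards [Ioi_mem_nhds hu] with x (hx : v < x)
        show (min x v) ^ δ * (x * v) ^ (1 - δ) = _
        rw [min_eq_right hx.le, Real.mul_rpow (hv0.trans hx).le hv0.le,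
          show v ^ δ * (x ^ (1-δ) * v ^ (1-δ)) = v ^ δ * v ^ (1-δ) * x ^ (1-δ) by ring,
          ← Real.rpow_add hv0, show δ + (1 - δ) = 1 by ring, Real.rpow_one]
      rw [heq.deriv_eq]
      exact ((Real.hasDerivAt_rpow_const (Or.inl (hv0.trans hu).ne')).const_mul v).deriv
    set h : ℝ → ℝ := fun u => (deriv f u) ^ 2 with hh
    have e1 : ∀ᵐ u : ℝ, u ∈ Set.uIoc (0:ℝ) v → h u = (v ^ ((1:ℝ) - δ)) ^ 2 := by
      filter_upwards [hne] with u huv hmem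
      rw [Set.uIoc_of_le hv0.le] at hmem
      rw [hh]; simp only
      rw [dA u ⟨hmem.1, lt_of_le_of_ne hmem.2 huv⟩]
    have e2 : ∀ u : ℝ, u ∈ Set.uIoc v (1:ℝ) → h u = ((1-δ)^2 * v^2) * u ^ (-(2*δ)) := by
      intro u hmem
      rw [Set.uIoc_of_le hv.2.le] at hmem
      have hu0 : (0:ℝ) < u := hv0.trans hmem.1
      rw [hh]; simp only
      rw [dB u hmem.1, show (1:ℝ) - δ - 1 = -δ by ring,
        show (v * ((1 - δ) * u ^ (-δ))) ^ 2 = (1-δ)^2*v^2 * (u ^ (-δ) * u ^ (-δ)) by ring,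
        ← Real.rpow_add hu0, show -δ + -δ = -(2*δ) by ring]
    have i1 : IntervalIntegrable h volume 0 v := by
      refine (intervalIntegrable_const (c := (v ^ ((1:ℝ) - δ)) ^ 2)).congr_ae ?_
      have he : h =ᵐ[volume.restrict (Set.uIoc (0:ℝ) v)] fun _ => (v ^ ((1:ℝ) - δ)) ^ 2 :=
        (ae_restrict_iff' measurableSet_uIoc).2 e1
      exact he.symm
    have i2 : IntervalIntegrable h volume v 1 := by
      have hc : ContinuousOn (fun u : ℝ => ((1-δ)^2 * v^2) * u ^ (-(2*δ))) (Set.uIcc v 1) := by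
        refine continuousOn_const.mul (ContinuousOn.rpow_const continuousOn_id fun x hx => ?_)
        rw [Set.uIcc_of_le hv.2.le] at hx
        exact Or.inl (hv0.trans_le hx.1).ne'
      refine hc.intervalIntegrable.congr_ae ?_
      have he : h =ᵐ[volume.restrict (Set.uIoc v (1:ℝ))] fun u => ((1-δ)^2 * v^2) * u ^ (-(2*δ)) :=
        (ae_restrict_iff' measurableSet_uIoc).2 (Filter.Eventually.of_forall e2)
      exact he.symm
    have hsplit := integral_add_adjacent_intervals i1 i2
    rw [show (∫ u in (0:ℝ)..1, (deriv (fun x : ℝ => (min x v) ^ δ * (x * v) ^ (1 - δ)) u) ^ 2)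
        = ∫ u in (0:ℝ)..1, h u from rfl, ← hsplit]
    have hI1 : ∫ u in (0:ℝ)..v, h u = v * (v ^ ((1:ℝ) - δ)) ^ 2 := by
      rw [integral_congr_ae e1, intervalIntegral.integral_const, smul_eq_mul, sub_zero]
    have hI2 : ∫ u in v..(1:ℝ), h u
        = ((1-δ)^2 * v^2) * ∫ u in v..(1:ℝ), u ^ (-(2*δ)) := by
      rw [integral_congr_ae (Filter.Eventually.of_forall e2), intervalIntegral.integral_const_mul]
    rw [hI1, hI2]
    have hv32 : v * (v ^ ((1:ℝ) - δ)) ^ 2 = v ^ ((3:ℝ) - 2*δ) := by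
      rw [sq, ← Real.rpow_add hv0]
      nth_rewrite 1 [← Real.rpow_one v]
      rw [← Real.rpow_add hv0]
      congr 1; ring
    rw [hv32]
  -- a.e. v ≠ 1
  have hane1 : ∀ᵐ (v : ℝ), v ≠ (1:ℝ) := by
    have h : ({(1:ℝ)} : Set ℝ)ᶜ ∈ ae (volume : Measure ℝ) :=
      compl_mem_ae_iff.2 (measure_singleton 1)
    filter_upwards [h] with u hu; simpa using hu
  by_cases hhalf : δ = 1/2
  · -- δ = 1/2 : logarithmic case
    subst hhalf
    have houter : (∫ v in (0:ℝ)..1, ∫ u in (0:ℝ)..1,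
        (deriv (fun x : ℝ => (min x v) ^ (1/2:ℝ) * (x * v) ^ (1 - (1/2:ℝ))) u) ^ 2)
        = ∫ v in (0:ℝ)..1, (v^2 - (1/4 : ℝ) * (v^2 * Real.log v)) := by
      refine integral_congr_ae ?_
      filter_upwards [hane1] with v hv1 hmem
      rw [Set.uIoc_of_le zero_le_one] at hmem
      have hvI : v ∈ Set.Ioo (0:ℝ) 1 := ⟨hmem.1, lt_of_le_of_ne hmem.2 hv1⟩
      rw [inner v hvI]
      have hK : (∫ u in v..(1:ℝ), u ^ (-(2*(1/2:ℝ)))) = - Real.log v := by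
        rw [show -(2*(1/2:ℝ)) = -1 by norm_num]
        rw [integral_congr (g := fun u : ℝ => u⁻¹) (fun u _ => Real.rpow_neg_one u),
          integral_inv (Set.notMem_uIcc_of_lt hvI.1 one_pos), one_div, Real.log_inv]
      rw [hK, show ((3:ℝ) - 2*(1/2:ℝ)) = ((2:ℕ):ℝ) by norm_num, Real.rpow_natCast]
      ring
    rw [houter]
    have hJ : (∫ v in (0:ℝ)..1, v^2 * Real.log v) = -(1/9 : ℝ) := by
      have hint : IntervalIntegrable (fun v : ℝ => v^2 * Real.log v) volume 0 1 := by
        have : (fun v : ℝ => v^2 * Real.log v) = fun v => v * (v * Real.log v) := by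
          funext v; ring
        rw [this]
        exact (continuous_id.mul Real.continuous_mul_log).intervalIntegrable 0 1
      have hcont : ContinuousOn (fun v : ℝ => v^2/3 * (v * Real.log v) - v^3/9)
          (Set.Icc (0:ℝ) 1) :=
        (((continuous_pow 2).div_const 3).mul Real.continuous_mul_log).sub
          ((continuous_pow 3).div_const 9) |>.continuousOn
      have hderiv : ∀ v ∈ Set.Ioo (0:ℝ) 1,
          HasDerivAt (fun v : ℝ => v^2/3 * (v * Real.log v) - v^3/9) (v^2 * Real.log v) v := by
        intro v hv
        have h1 : HasDerivAt (fun v : ℝ => v * Real.log v) (1 * Real.log v + v * v⁻¹) v :=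
          (hasDerivAt_id v).mul (Real.hasDerivAt_log hv.1.ne')
        have h2 : HasDerivAt (fun v : ℝ => v^2/3) ((2:ℕ) * v^(2-1)/3) v :=
          (hasDerivAt_pow 2 v).div_const 3
        have h3 : HasDerivAt (fun v : ℝ => v^3/9) ((3:ℕ) * v^(3-1)/9) v :=
          (hasDerivAt_pow 3 v).div_const 9
        have := (h2.mul h1).sub h3
        refine this.congr_deriv ?_
        rw [mul_inv_cancel₀ hv.1.ne']
        push_cast
        ring
      have := integral_eq_sub_of_hasDeriv_right_of_le zero_le_one hcont
        (fun v hv => (hderiv v hv).hasDerivWithinAt) hint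
      rw [this]
      norm_num
    have h2 : IntervalIntegrable (fun v : ℝ => v^2) volume 0 1 :=
      (continuous_pow 2).intervalIntegrable 0 1
    have h3 : IntervalIntegrable (fun v : ℝ => v^2 * Real.log v) volume 0 1 := by
      have : (fun v : ℝ => v^2 * Real.log v) = fun v => v * (v * Real.log v) := by
        funext v; ring
      rw [this]
      exact (continuous_id.mul Real.continuous_mul_log).intervalIntegrable 0 1
    rw [integral_sub h2 (h3.const_mul _), intervalIntegral.integral_const_mul, integral_pow, hJ]
    norm_num
  · -- δ ≠ 1/2
    have h12 : (1:ℝ) - 2*δ ≠ 0 := fun h => hhalf (by linarith)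
    have h3 : (-1:ℝ) < 3 - 2*δ := by linarith
    have houter : (∫ v in (0:ℝ)..1, ∫ u in (0:ℝ)..1,
        (deriv (fun x : ℝ => (min x v) ^ δ * (x * v) ^ (1 - δ)) u) ^ 2)
        = ∫ v in (0:ℝ)..1,
          ((1 - (1-δ)^2/(1-2*δ)) * v ^ ((3:ℝ) - 2*δ) + ((1-δ)^2/(1-2*δ)) * v^2) := by
      refine integral_congr_ae ?_
      filter_upwards [hane1] with v hv1 hmem
      rw [Set.uIoc_of_le zero_le_one] at hmem
      have hvI : v ∈ Set.Ioo (0:ℝ) 1 := ⟨hmem.1, lt_of_le_of_ne hmem.2 hv1⟩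
      rw [inner v hvI]
      rw [integral_rpow (Or.inr ⟨fun hc => h12 (by linarith [neg_eq_iff_eq_neg.1 hc]), 
        Set.notMem_uIcc_of_lt hvI.1 one_pos⟩)]
      rw [Real.one_rpow, show -(2*δ)+1 = (1:ℝ)-2*δ by ring]
      have hA : v ^ ((3:ℝ)-2*δ) = v^2 * v^((1:ℝ)-2*δ) := by
        rw [show ((3:ℝ)-2*δ) = ((2:ℕ):ℝ) + (1-2*δ) by push_cast; ring, Real.rpow_add hvI.1,
          Real.rpow_natCast]
      rw [hA]
      field_simp
      ring
    rw [houter]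
    have i3 : IntervalIntegrable (fun v : ℝ => v ^ ((3:ℝ) - 2*δ)) volume 0 1 :=
      intervalIntegral.intervalIntegrable_rpow' h3
    have i4 : IntervalIntegrable (fun v : ℝ => v^2) volume 0 1 :=
      (continuous_pow 2).intervalIntegrable 0 1
    rw [integral_add (i3.const_mul _) (i4.const_mul _), intervalIntegral.integral_const_mul,
      intervalIntegral.integral_const_mul, integral_rpow (Or.inl h3), integral_pow]
    rw [Real.one_rpow, Real.zero_rpow (by linarith : (3:ℝ) - 2*δ + 1 ≠ 0)]
    have h2δ : (2:ℝ) - δ ≠ 0 := by intro h; linarith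
    have h4δ : (3:ℝ) - 2*δ + 1 ≠ 0 := by intro h; linarith
    have h12' : (1:ℝ) - δ*2 ≠ 0 := by intro h; apply h12; linarith
    have h4δ' : (3:ℝ) - δ*2 + 1 ≠ 0 := by intro h; linarith
    field_simp
    ring
end

section
/- For the Marshall-Olkin copula C_{α1,α2}(u,v) = min(u^{1−α1}·v, u·v^{1−α2}) with parameters α1, α2 ∈ (0,1], Chatterjee's xi coefficient equals ξ(C_{α1,α2}) = 6·∫₀¹∫₀¹ (∂₁C_{α1,α2}(u,v))² du dv − 2 = 2·α1²·α2 / (3·α1 + α2 − 2·α1·α2). -/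
open Real

section MOAux

open MeasureTheory Set intervalIntegral

-- aux lemma: ∫_0^1 v^2 log v = -1/9
lemma integral_sq_mul_log : ∫ v in (0:ℝ)..1, v^2 * Real.log v = -(1/9) := by
  have hcont : ContinuousOn (fun v : ℝ => v^2 * (v * Real.log v) / 3 - v^3/9) (Set.Icc 0 1) :=
    ((((continuous_pow 2).mul Real.continuous_mul_log).div_const 3).sub
      ((continuous_pow 3).div_const 9)).continuousOn
  have hderiv : ∀ x ∈ Set.Ioo (0:ℝ) 1,
      HasDerivWithinAt (fun v : ℝ => v^2 * (v*Real.log v)/3 - v^3/9)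
        (x^2 * Real.log x) (Set.Ioi x) x := by
    intro x hx
    have hx0 : x ≠ 0 := ne_of_gt hx.1
    have h := ((((hasDerivAt_pow 2 x).mul (Real.hasDerivAt_mul_log hx0)).div_const 3).sub
      ((hasDerivAt_pow 3 x).div_const 9))
    apply HasDerivAt.hasDerivWithinAt
    convert h using 1
    · rfl
    · rw [show (2:ℕ)-1 = 1 from rfl, show (3:ℕ)-1 = 2 from rfl]
      push_cast
      ring
  have hint : IntervalIntegrable (fun v : ℝ => v^2 * Real.log v) volume 0 1 := by
    have heq : (fun v : ℝ => v^2 * Real.log v) = fun v => v * (v * Real.log v) := by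
      funext v; ring
    rw [heq]
    exact (continuous_id.mul Real.continuous_mul_log).intervalIntegrable _ _
  have := intervalIntegral.integral_eq_sub_of_hasDeriv_right_of_le zero_le_one hcont hderiv hint
  rw [this]
  norm_num


lemma inner_eval (α₁ α₂ v : ℝ) (ha0 : 0 < α₁) (hb0 : 0 < α₂)
    (hv0 : 0 < v) (hv1 : v < 1) :
    (∫ u in (0:ℝ)..1, ((if u ^ (1 - α₁) * v < u * v ^ (1 - α₂)
        then (1 - α₁) * u ^ (-α₁) * v
        else v ^ (1 - α₂)) : ℝ) ^ 2)
    = v ^ (α₂/α₁) * (v ^ (1 - α₂)) ^ 2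
      + (1 - α₁) ^ 2 * v ^ 2 * ∫ u in (v ^ (α₂/α₁))..1, u ^ (-(2*α₁)) := by
  set β : ℝ := α₂ / α₁ with hβ
  have hβ0 : 0 < β := div_pos hb0 ha0
  set t : ℝ := v ^ β with ht
  have ht0 : 0 < t := Real.rpow_pos_of_pos hv0 _
  have ht1 : t < 1 := Real.rpow_lt_one hv0.le hv1 hβ0
  set f : ℝ → ℝ := fun u => ((if u ^ (1 - α₁) * v < u * v ^ (1 - α₂)
        then (1 - α₁) * u ^ (-α₁) * v
        else v ^ (1 - α₂)) : ℝ) ^ 2 with hf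
  have hta : t ^ α₁ = v ^ α₂ := by
    rw [ht, ← Real.rpow_mul hv0.le, hβ, div_mul_cancel₀ _ (ne_of_gt ha0)]
  -- the condition characterization
  have hiff : ∀ u : ℝ, 0 < u →
      (u ^ (1 - α₁) * v < u * v ^ (1 - α₂) ↔ v ^ α₂ < u ^ α₁) := by
    intro u hu
    have hua : (0:ℝ) < u ^ α₁ := Real.rpow_pos_of_pos hu _
    have hvb : (0:ℝ) < v ^ α₂ := Real.rpow_pos_of_pos hv0 _
    rw [Real.rpow_sub hu, Real.rpow_one, Real.rpow_sub hv0, Real.rpow_one,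
      div_mul_eq_mul_div, mul_div_assoc']
    rw [div_lt_div_iff₀ hua hvb]
    constructor
    · intro h
      have := (mul_lt_mul_iff_right₀ (mul_pos hu hv0)).mp h
      exact this
    · intro h
      exact (mul_lt_mul_iff_right₀ (mul_pos hu hv0)).mpr h
  -- condition true on Ioc t 1
  have hcondT : ∀ u : ℝ, t < u → u ≤ 1 → u ^ (1 - α₁) * v < u * v ^ (1 - α₂) := by
    intro u hu hu1
    have hu0 : 0 < u := lt_trans ht0 hu
    rw [hiff u hu0, ← hta]
    exact Real.rpow_lt_rpow ht0.le hu ha0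
  -- condition false on Ioo 0 t
  have hcondF : ∀ u : ℝ, 0 < u → u < t → ¬ (u ^ (1 - α₁) * v < u * v ^ (1 - α₂)) := by
    intro u hu0 hut
    rw [hiff u hu0, ← hta, not_lt]
    exact (Real.rpow_lt_rpow hu0.le hut ha0).le
  have hne : ∀ᵐ x : ℝ, x ≠ t := by
    rw [MeasureTheory.ae_iff]
    have : {a : ℝ | ¬ a ≠ t} = {t} := by ext x; simp
    rw [this]
    exact measure_singleton t
  -- ae equality on (0, t]
  have hcg1' : ∀ᵐ x : ℝ, x ∈ Set.uIoc (0:ℝ) t → (fun _ : ℝ => (v ^ (1-α₂))^2) x = f x := by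
    filter_upwards [hne] with x hxt hx
    rw [Set.uIoc_of_le ht0.le] at hx
    have hx0 : 0 < x := hx.1
    have hxt' : x < t := lt_of_le_of_ne hx.2 hxt
    simp only [hf, if_neg (hcondF x hx0 hxt')]
  have hcg1 : ∀ᵐ x ∂(volume.restrict (Set.uIoc (0:ℝ) t)), (fun _ : ℝ => (v ^ (1-α₂))^2) x = f x :=
    (ae_restrict_iff' measurableSet_uIoc).2 hcg1'
  -- ae equality on (t, 1]
  have hcg2' : ∀ᵐ x : ℝ, x ∈ Set.uIoc t 1 →
      (fun u : ℝ => (1-α₁)^2 * v^2 * u ^ (-(2*α₁))) x = f x := by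
    apply Filter.Eventually.of_forall
    intro x hx
    rw [Set.uIoc_of_le ht1.le] at hx
    have hx0 : 0 < x := lt_trans ht0 hx.1
    simp only [hf, if_pos (hcondT x hx.1 hx.2)]
    rw [mul_pow, mul_pow, ← Real.rpow_natCast (x ^ (-α₁)) 2, ← Real.rpow_mul hx0.le]
    rw [show (-α₁) * ((2:ℕ):ℝ) = -(2*α₁) by push_cast; ring]
    ring
  have hcg2 : ∀ᵐ x ∂(volume.restrict (Set.uIoc t 1)),
      (fun u : ℝ => (1-α₁)^2 * v^2 * u ^ (-(2*α₁))) x = f x :=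
    (ae_restrict_iff' measurableSet_uIoc).2 hcg2'
  have hI1 : IntervalIntegrable f volume 0 t :=
    (intervalIntegrable_const (c := (v ^ (1-α₂))^2)).congr_ae hcg1
  have hI2 : IntervalIntegrable f volume t 1 := by
    refine (IntervalIntegrable.congr_ae ?_ hcg2)
    apply ContinuousOn.intervalIntegrable
    apply ContinuousOn.mul continuousOn_const
    apply ContinuousOn.rpow_const continuousOn_id
    intro x hx
    left
    rw [Set.uIcc_of_le ht1.le] at hx
    exact ne_of_gt (lt_of_lt_of_le ht0 hx.1)
  rw [← intervalIntegral.integral_add_adjacent_intervals hI1 hI2]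
  have e1 : ∫ u in (0:ℝ)..t, f u = t * (v ^ (1-α₂))^2 := by
    rw [← intervalIntegral.integral_congr_ae hcg1']
    rw [intervalIntegral.integral_const, smul_eq_mul, sub_zero]
  have e2 : ∫ u in t..1, f u = (1-α₁)^2 * v^2 * ∫ u in t..1, u ^ (-(2*α₁)) := by
    rw [← intervalIntegral.integral_congr_ae hcg2']
    rw [intervalIntegral.integral_const_mul]
  rw [e1, e2]

end MOAux

open MeasureTheory Set intervalIntegral in
theorem marshall_olkin_chatterjee_xi (α₁ α₂ : ℝ)
    (h₁ : α₁ ∈ Set.Ioc (0:ℝ) 1) (h₂ : α₂ ∈ Set.Ioc (0:ℝ) 1) :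
    6 * (∫ v in (0:ℝ)..1, ∫ u in (0:ℝ)..1,
        ((if u ^ (1 - α₁) * v < u * v ^ (1 - α₂)
            then (1 - α₁) * u ^ (-α₁) * v
            else v ^ (1 - α₂)) : ℝ) ^ 2) - 2
      = 2 * α₁ ^ 2 * α₂ / (3 * α₁ + α₂ - 2 * α₁ * α₂) := by
  obtain ⟨ha0, ha1⟩ := h₁
  obtain ⟨hb0, hb1⟩ := h₂
  have hne1 : ∀ᵐ x : ℝ, x ≠ (1:ℝ) := by
    rw [MeasureTheory.ae_iff]
    have : {a : ℝ | ¬ a ≠ (1:ℝ)} = {(1:ℝ)} := by ext x; simp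
    rw [this]; exact measure_singleton 1
  set β : ℝ := α₂ / α₁ with hβ
  have hβ0 : 0 < β := div_pos hb0 ha0
  by_cases hhalf : α₁ = 1/2
  · -- α₁ = 1/2 case
    subst hhalf
    have houter : (∫ v in (0:ℝ)..1, ∫ u in (0:ℝ)..1,
        ((if u ^ (1 - (1/2:ℝ)) * v < u * v ^ (1 - α₂)
            then (1 - (1/2:ℝ)) * u ^ (-(1/2:ℝ)) * v
            else v ^ (1 - α₂)) : ℝ) ^ 2)
        = ∫ v in (0:ℝ)..1, (v^2 - α₂/2 * (v^2 * Real.log v)) := by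
      apply intervalIntegral.integral_congr_ae
      filter_upwards [hne1] with v hv1' hv
      rw [Set.uIoc_of_le zero_le_one] at hv
      have hv0 : 0 < v := hv.1
      have hv1 : v < 1 := lt_of_le_of_ne hv.2 hv1'
      rw [inner_eval _ _ _ ha0 hb0 hv0 hv1]
      have hβval : α₂ / (1/2:ℝ) = 2 * α₂ := by ring
      have hK : (∫ u in (v ^ (α₂/(1/2:ℝ)))..1, u ^ (-(2*(1/2:ℝ)):ℝ))
          = -(2*α₂) * Real.log v := by
        have ht0 : (0:ℝ) < v ^ (α₂/(1/2:ℝ)) := Real.rpow_pos_of_pos hv0 _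
        have : ∀ u ∈ Set.uIcc (v ^ (α₂/(1/2:ℝ))) (1:ℝ), u ^ (-(2*(1/2:ℝ)):ℝ) = u⁻¹ := by
          intro u hu
          rw [show (-(2*(1/2:ℝ)):ℝ) = -1 by norm_num, Real.rpow_neg_one]
        rw [intervalIntegral.integral_congr this, integral_inv_of_pos ht0 one_pos,
          one_div, Real.log_inv, Real.log_rpow hv0, hβval]
        ring
      rw [hK]
      have e1 : (v ^ (1-α₂))^2 = v ^ (2 - 2*α₂) := by
        rw [← Real.rpow_natCast (v ^ (1-α₂)) 2, ← Real.rpow_mul hv0.le]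
        norm_num
        rw [show (1-α₂) * (2:ℝ) = 2-2*α₂ by ring]
      rw [e1, ← Real.rpow_add hv0, hβval,
        show 2*α₂ + (2 - 2*α₂) = ((2:ℕ):ℝ) by push_cast; ring, Real.rpow_natCast]
      ring
    rw [houter]
    have hi1 : IntervalIntegrable (fun v : ℝ => v^2) volume 0 1 :=
      (continuous_pow 2).intervalIntegrable _ _
    have hi2 : IntervalIntegrable (fun v : ℝ => v^2 * Real.log v) volume 0 1 := by
      have heq : (fun v : ℝ => v^2 * Real.log v) = fun v => v * (v * Real.log v) := by
        funext v; ring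
      rw [heq]
      exact (continuous_id.mul Real.continuous_mul_log).intervalIntegrable _ _
    rw [intervalIntegral.integral_sub hi1 (hi2.const_mul _),
      intervalIntegral.integral_const_mul, integral_sq_mul_log, integral_pow]
    norm_num
    ring
  · -- α₁ ≠ 1/2 case
    have h2a : (1:ℝ) - 2*α₁ ≠ 0 := by
      intro h; apply hhalf; linarith
    set c : ℝ := (1-α₁)^2 / (1-2*α₁) with hc
    set p : ℝ := β + 2 - 2*α₂ with hp
    have hp1 : (-1:ℝ) < p := by
      have : (0:ℝ) < β + 3 - 2*α₂ := by linarith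
      linarith
    have houter : (∫ v in (0:ℝ)..1, ∫ u in (0:ℝ)..1,
        ((if u ^ (1 - α₁) * v < u * v ^ (1 - α₂)
            then (1 - α₁) * u ^ (-α₁) * v
            else v ^ (1 - α₂)) : ℝ) ^ 2)
        = ∫ v in (0:ℝ)..1, (v ^ p + c * (v ^ (2:ℝ) - v ^ p)) := by
      apply intervalIntegral.integral_congr_ae
      filter_upwards [hne1] with v hv1' hv
      rw [Set.uIoc_of_le zero_le_one] at hv
      have hv0 : 0 < v := hv.1
      have hv1 : v < 1 := lt_of_le_of_ne hv.2 hv1'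
      rw [inner_eval _ _ _ ha0 hb0 hv0 hv1]
      have ht0 : (0:ℝ) < v ^ β := Real.rpow_pos_of_pos hv0 _
      set W : ℝ := v ^ (β - 2*α₂) with hW
      set B : ℝ := v ^ (2:ℝ) with hB
      have hK : (∫ u in (v ^ β)..1, u ^ (-(2*α₁)))
          = (1 - W) / (1 - 2*α₁) := by
        rw [integral_rpow (r := -(2*α₁)) (Or.inr ⟨by intro h; apply hhalf; linarith [neg_eq_iff_eq_neg.mp h],
          Set.notMem_uIcc_of_lt ht0 one_pos⟩)]
        rw [Real.one_rpow, ← Real.rpow_mul hv0.le,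
          show β * (-(2*α₁)+1) = β - 2*α₂ by rw [hβ]; field_simp; ring,
          show -(2*α₁) + 1 = 1 - 2*α₁ by ring]
      rw [hK]
      have e1 : (v ^ (1-α₂))^2 = v ^ (2 - 2*α₂) := by
        rw [← Real.rpow_natCast (v ^ (1-α₂)) 2, ← Real.rpow_mul hv0.le]
        norm_num
        rw [show (1-α₂) * (2:ℝ) = 2-2*α₂ by ring]
      have e2 : v ^ β * v ^ (2-2*α₂) = B * W := by
        rw [← Real.rpow_add hv0, hB, hW, ← Real.rpow_add hv0]
        congr 1; ring
      have e3 : v ^ p = B * W := by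
        rw [hB, hW, ← Real.rpow_add hv0]
        congr 1; ring
      have e4 : v ^ 2 = B := by
        rw [hB, show (2:ℝ) = ((2:ℕ):ℝ) by norm_num, Real.rpow_natCast]
      rw [e1, e2, e3, e4, hc]
      field_simp
    rw [houter]
    have hi1 : IntervalIntegrable (fun v : ℝ => v ^ p) volume 0 1 :=
      intervalIntegrable_rpow' hp1
    have hi2 : IntervalIntegrable (fun v : ℝ => v ^ (2:ℝ)) volume 0 1 :=
      intervalIntegrable_rpow' (by norm_num)
    rw [intervalIntegral.integral_add hi1 ((hi2.sub hi1).const_mul c),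
      intervalIntegral.integral_const_mul,
      intervalIntegral.integral_sub hi2 hi1,
      integral_rpow (Or.inl hp1), integral_rpow (Or.inl (by norm_num : (-1:ℝ) < 2))]
    rw [Real.one_rpow, Real.one_rpow, Real.zero_rpow (by linarith : p + 1 ≠ 0),
      Real.zero_rpow (by norm_num : (2:ℝ) + 1 ≠ 0)]
    have hEpos : 0 < 3*α₁ + α₂ - 2*α₁*α₂ := by
      nlinarith [mul_nonneg ha0.le (sub_nonneg.2 hb1)]
    have hE : 3*α₁ + α₂ - 2*α₁*α₂ ≠ 0 := ne_of_gt hEpos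
    have hp1' : p + 1 ≠ 0 := by linarith
    rw [hc, hp, hβ]
    have hβp : α₂/α₁ + 2 - 2*α₂ + 1 = (3*α₁ + α₂ - 2*α₁*α₂)/α₁ := by
      field_simp; ring
    rw [hβp]
    have hE' : 3*α₁ + α₂ - α₁*α₂*2 ≠ 0 := by intro h; apply hE; linarith
    have h2a' : 1 - α₁*2 ≠ 0 := by intro h; apply h2a; linarith
    field_simp [ha0.ne', h2a, hE, hE', h2a']
    ring
end

section
/- For the Cuadras-Augé copula C_δ(u,v) = min(u,v)^δ · (uv)^{1−δ} with δ ∈ [0,1], Spearman's rho equals ρ_S(C_δ) = 12·∫₀¹∫₀¹ C_δ(u,v) du dv − 3 = 3δ/(4−δ). -/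
open Real

open intervalIntegral

theorem cuadras_auge_spearman_rho (δ : ℝ) (hδ : δ ∈ Set.Icc (0:ℝ) 1) :
    12 * (∫ v in (0:ℝ)..1, ∫ u in (0:ℝ)..1,
        (min u v) ^ δ * (u * v) ^ (1 - δ)) - 3
      = 3 * δ / (4 - δ) := by
  obtain ⟨hδ0, hδ1⟩ := hδ
  have h2 : (2:ℝ) - δ ≠ 0 := by intro hh; linarith
  have h4 : (4:ℝ) - δ ≠ 0 := by intro hh; linarith
  have h3 : (3:ℝ) - δ ≠ 0 := by intro hh; linarith
  have hcont : Continuous (fun p : ℝ × ℝ => (min p.1 p.2) ^ δ * (p.1 * p.2) ^ (1 - δ)) := by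
    apply Continuous.mul
    · exact (continuous_fst.min continuous_snd).rpow_const (fun x => Or.inr hδ0)
    · exact (continuous_fst.mul continuous_snd).rpow_const (fun x => Or.inr (by linarith))
  have inner : ∀ v ∈ Set.Icc (0:ℝ) 1,
      (∫ u in (0:ℝ)..1, (min u v) ^ δ * (u * v) ^ (1 - δ))
        = v ^ (3 - δ) / 2 + (v - v ^ (3 - δ)) / (2 - δ) := by
    intro v ⟨hv0, hv1⟩
    rcases eq_or_lt_of_le hv0 with h | hv
    · rw [← h]
      have : (∫ u in (0:ℝ)..1, (min u 0) ^ δ * (u * 0) ^ (1 - δ)) = 0 := by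
        rw [intervalIntegral.integral_congr (g := fun _ => (0:ℝ))]
        · simp
        · intro u hu
          rw [Set.uIcc_of_le (by norm_num)] at hu
          simp only [min_eq_right hu.1, mul_zero]
          rcases eq_or_lt_of_le hδ0 with h0 | h0
          · rw [zero_rpow (show (1:ℝ) - δ ≠ 0 by rw [← h0]; norm_num)]; ring
          · rw [zero_rpow (ne_of_gt h0)]; ring
      rw [this, zero_rpow h3]
      norm_num
    have hint : ∀ a b : ℝ, IntervalIntegrable
        (fun u => (min u v) ^ δ * (u * v) ^ (1 - δ)) MeasureTheory.volume a b :=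
      fun a b => (hcont.comp (continuous_id.prodMk continuous_const)).intervalIntegrable a b
    rw [← intervalIntegral.integral_add_adjacent_intervals (b := v) (hint 0 v) (hint v 1)]
    have e1 : (∫ u in (0:ℝ)..v, (min u v) ^ δ * (u * v) ^ (1 - δ))
        = v ^ (3 - δ) / 2 := by
      rw [intervalIntegral.integral_congr (g := fun u => v ^ (1 - δ) * u)]
      · rw [intervalIntegral.integral_const_mul, integral_id]
        rw [show v ^ 2 = v ^ ((2:ℝ)) by rw [← Real.rpow_natCast v 2]; norm_num]
        rw [show (0:ℝ) ^ 2 = 0 by norm_num, sub_zero,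
          show v ^ (1-δ) * (v ^ ((2:ℝ)) / 2) = v ^ (1-δ) * v ^ ((2:ℝ)) / 2 by ring,
          ← Real.rpow_add' (le_of_lt hv) (show (1:ℝ) - δ + 2 ≠ 0 by intro hh; linarith),
          show (1:ℝ) - δ + 2 = 3 - δ by ring]
      · intro u hu
        rw [Set.uIcc_of_le (le_of_lt hv)] at hu
        simp only [min_eq_left hu.2, Real.mul_rpow hu.1 (le_of_lt hv)]
        rw [show u ^ δ * (u ^ (1-δ) * v ^ (1-δ)) = u ^ δ * u ^ (1-δ) * v ^ (1-δ) by ring,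
          ← Real.rpow_add' hu.1 (show δ + (1 - δ) ≠ 0 by norm_num)]
        simp [Real.rpow_one]; ring
    have e2 : (∫ u in v..1, (min u v) ^ δ * (u * v) ^ (1 - δ))
        = (v - v ^ (3 - δ)) / (2 - δ) := by
      rw [intervalIntegral.integral_congr (g := fun u => v * u ^ (1 - δ))]
      · rw [intervalIntegral.integral_const_mul,
          integral_rpow (Or.inl (by linarith : (-1:ℝ) < 1 - δ))]
        rw [Real.one_rpow, show (1:ℝ) - δ + 1 = 2 - δ by ring]
        rw [← mul_div_assoc, mul_sub, mul_one]
        rw [show v * v ^ (2 - δ) = v ^ ((1:ℝ)) * v ^ (2 - δ) by rw [Real.rpow_one],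
          ← Real.rpow_add' (le_of_lt hv) (show (1:ℝ) + (2 - δ) ≠ 0 by intro hh; linarith),
          show (1:ℝ) + (2 - δ) = 3 - δ by ring]
      · intro u hu
        rw [Set.uIcc_of_le hv1] at hu
        simp only [min_eq_right hu.1, Real.mul_rpow (le_trans (le_of_lt hv) hu.1) (le_of_lt hv)]
        rw [show v ^ δ * (u ^ (1-δ) * v ^ (1-δ)) = v ^ δ * v ^ (1-δ) * u ^ (1-δ) by ring,
          ← Real.rpow_add' (le_of_lt hv) (show δ + (1 - δ) ≠ 0 by norm_num)]
        simp [Real.rpow_one]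
    rw [e1, e2]
  rw [intervalIntegral.integral_congr (g := fun v => v ^ (3 - δ) / 2 + (v - v ^ (3 - δ)) / (2 - δ))
    (fun v hv => inner v (by rwa [Set.uIcc_of_le (by norm_num : (0:ℝ) ≤ 1)] at hv))]
  have hiA : IntervalIntegrable (fun v : ℝ => v ^ (3 - δ)) MeasureTheory.volume 0 1 :=
    intervalIntegral.intervalIntegrable_rpow' (by linarith)
  have hiB : IntervalIntegrable (fun v : ℝ => v) MeasureTheory.volume 0 1 :=
    continuous_id.intervalIntegrable 0 1
  have hA : (∫ v in (0:ℝ)..1, v ^ (3 - δ)) = 1 / (4 - δ) := by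
    rw [integral_rpow (Or.inl (by linarith : (-1:ℝ) < 3 - δ))]
    rw [Real.one_rpow, Real.zero_rpow (show (3:ℝ) - δ + 1 ≠ 0 by intro hh; linarith)]
    rw [show (3:ℝ) - δ + 1 = 4 - δ by ring, sub_zero]
  have hB : (∫ v in (0:ℝ)..1, v) = 1 / 2 := by
    rw [integral_id]; norm_num
  rw [intervalIntegral.integral_add (hiA.div_const 2) ((hiB.sub hiA).div_const (2 - δ)),
    intervalIntegral.integral_div, intervalIntegral.integral_div,
    intervalIntegral.integral_sub hiB hiA, hA, hB]
  field_simp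
  ring
end

section
/- For the Ali-Mikhail-Haq copula C_θ(u,v) = uv / (1 − θ(1−u)(1−v)) with θ ∈ (0,1), Chatterjee's xi coefficient equals ξ(C_θ) = 6·∫₀¹∫₀¹ (∂₁C_θ(u,v))² du dv − 2 = −θ/6 − 2/3 + 3/θ − 2/θ² − 2(θ−1)²·ln(1−θ)/θ³. -/
open Real

set_option maxHeartbeats 1000000 in
lemma inner_int (θ v : ℝ) (hθ : θ ∈ Set.Ioo (0:ℝ) 1) (hv : v ∈ Set.Icc (0:ℝ) 1) :
    ∫ u in (0:ℝ)..1,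
        (v * (θ * u * (v - 1) - θ * (u - 1) * (v - 1) + 1) /
          (θ * (u - 1) * (v - 1) - 1) ^ 2) ^ 2
      = v ^ 2 * (3 - 3 * (θ * (1 - v)) + (θ * (1 - v)) ^ 2) / (3 * (1 - θ * (1 - v))) := by
  obtain ⟨hθ0, hθ1⟩ := hθ
  obtain ⟨hv0, hv1⟩ := hv
  rcases eq_or_lt_of_le hv1 with h1 | h1
  · subst h1
    norm_num
  · set a := θ * (1 - v) with ha
    have ha0 : 0 < a := by apply mul_pos hθ0; linarith
    have ha1 : a < 1 := by nlinarith
    have hpos : ∀ x : ℝ, x ∈ Set.uIcc (0:ℝ) 1 → 0 < 1 - a + a * x := by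
      intro x hx
      rw [Set.uIcc_of_le (by norm_num)] at hx
      nlinarith [hx.1, hx.2]
    have key : ∀ x ∈ Set.uIcc (0:ℝ) 1,
        HasDerivAt (fun u : ℝ => -(v ^ 2 * (1 - a) ^ 2) / (3 * a * (1 - a + a * u) ^ 3))
          ((v * (θ * x * (v - 1) - θ * (x - 1) * (v - 1) + 1) /
          (θ * (x - 1) * (v - 1) - 1) ^ 2) ^ 2) x := by
      intro x hx
      have hx0 := hpos x hx
      have hlin : HasDerivAt (fun u : ℝ => 1 - a + a * u) a x := by
        simpa using ((hasDerivAt_id x).const_mul a).const_add (1 - a)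
      have hD : HasDerivAt (fun u : ℝ => 3 * a * (1 - a + a * u) ^ 3)
          (3 * a * (3 * (1 - a + a * x) ^ 2 * a)) x := (hlin.pow 3).const_mul (3 * a)
      have hDne : 3 * a * (1 - a + a * x) ^ 3 ≠ 0 := by positivity
      have := (hasDerivAt_const x (-(v ^ 2 * (1 - a) ^ 2))).div hD hDne
      refine this.congr_deriv ?_
      have hden : θ * (x - 1) * (v - 1) - 1 = -(1 - a + a * x) := by rw [ha]; ring
      have hnum : θ * x * (v - 1) - θ * (x - 1) * (v - 1) + 1 = 1 - a := by rw [ha]; ring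
      rw [hden, hnum, neg_sq]
      have h1 : (1 - a + a * x) ≠ 0 := ne_of_gt hx0
      have h2 : a ≠ 0 := ne_of_gt ha0
      field_simp
      ring
    have hcont : IntervalIntegrable (fun x : ℝ =>
        (v * (θ * x * (v - 1) - θ * (x - 1) * (v - 1) + 1) /
          (θ * (x - 1) * (v - 1) - 1) ^ 2) ^ 2) MeasureTheory.volume 0 1 := by
      apply ContinuousOn.intervalIntegrable
      apply ContinuousOn.pow
      apply ContinuousOn.div (by fun_prop) (by fun_prop)
      intro x hx
      have hx0 := hpos x hx
      have hden : θ * (x - 1) * (v - 1) - 1 = -(1 - a + a * x) := by rw [ha]; ring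
      rw [hden, neg_sq]
      positivity
    rw [intervalIntegral.integral_eq_sub_of_hasDerivAt key hcont]
    have hne : (1 : ℝ) - a ≠ 0 := by linarith
    have hne2 : a ≠ 0 := ne_of_gt ha0
    simp only [mul_one, mul_zero, add_zero, sub_add_cancel, one_pow]
    field_simp
    ring

set_option maxHeartbeats 1000000 in
theorem amh_chatterjee_xi (θ : ℝ) (hθ : θ ∈ Set.Ioo (0:ℝ) 1) :
    6 * (∫ v in (0:ℝ)..1, ∫ u in (0:ℝ)..1,
        (v * (θ * u * (v - 1) - θ * (u - 1) * (v - 1) + 1) /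
          (θ * (u - 1) * (v - 1) - 1) ^ 2) ^ 2) - 2
      = -θ / 6 - 2 / 3 + 3 / θ - 2 / θ ^ 2
          - 2 * (θ - 1) ^ 2 * Real.log (1 - θ) / θ ^ 3 := by
  obtain ⟨hθ0, hθ1⟩ := hθ
  have hθne : θ ≠ 0 := ne_of_gt hθ0
  have hcong : (∫ v in (0:ℝ)..1, ∫ u in (0:ℝ)..1,
        (v * (θ * u * (v - 1) - θ * (u - 1) * (v - 1) + 1) /
          (θ * (u - 1) * (v - 1) - 1) ^ 2) ^ 2)
      = ∫ v in (0:ℝ)..1,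
          v ^ 2 * (3 - 3 * (θ * (1 - v)) + (θ * (1 - v)) ^ 2) / (3 * (1 - θ * (1 - v))) := by
    apply intervalIntegral.integral_congr
    intro v hv
    rw [Set.uIcc_of_le (by norm_num : (0:ℝ) ≤ 1)] at hv
    exact inner_int θ v ⟨hθ0, hθ1⟩ hv
  rw [hcong]
  have hpos : ∀ x : ℝ, x ∈ Set.uIcc (0:ℝ) 1 → 0 < 1 - θ + θ * x := by
    intro x hx
    rw [Set.uIcc_of_le (by norm_num)] at hx
    nlinarith [hx.1, hx.2]
  have key : ∀ x ∈ Set.uIcc (0:ℝ) 1,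
      HasDerivAt (fun y : ℝ => θ * y ^ 4 / 12 + (2 - θ) * y ^ 3 / 9 + y ^ 2 / (6 * θ)
          - (1 - θ) * y / (3 * θ ^ 2) + (1 - θ) ^ 2 * Real.log (1 - θ + θ * y) / (3 * θ ^ 3))
        (x ^ 2 * (3 - 3 * (θ * (1 - x)) + (θ * (1 - x)) ^ 2) / (3 * (1 - θ * (1 - x)))) x := by
    intro x hx
    have hx0 := hpos x hx
    have hlin : HasDerivAt (fun y : ℝ => 1 - θ + θ * y) θ x := by
      simpa using ((hasDerivAt_id x).const_mul θ).const_add (1 - θ)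
    have hlog : HasDerivAt (fun y : ℝ => Real.log (1 - θ + θ * y)) (θ / (1 - θ + θ * x)) x :=
      hlin.log (ne_of_gt hx0)
    have h1 : HasDerivAt (fun y : ℝ => θ * y ^ 4 / 12) (θ * (4 * x ^ 3) / 12) x :=
      ((hasDerivAt_pow 4 x).const_mul θ).div_const 12
    have h2 : HasDerivAt (fun y : ℝ => (2 - θ) * y ^ 3 / 9) ((2 - θ) * (3 * x ^ 2) / 9) x :=
      ((hasDerivAt_pow 3 x).const_mul (2 - θ)).div_const 9
    have h3 : HasDerivAt (fun y : ℝ => y ^ 2 / (6 * θ)) (2 * x / (6 * θ)) x := by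
      simpa using (hasDerivAt_pow 2 x).div_const (6 * θ)
    have h4 : HasDerivAt (fun y : ℝ => (1 - θ) * y / (3 * θ ^ 2)) ((1 - θ) / (3 * θ ^ 2)) x := by
      simpa using (((hasDerivAt_id x).const_mul (1 - θ)).div_const (3 * θ ^ 2))
    have h5 : HasDerivAt (fun y : ℝ => (1 - θ) ^ 2 * Real.log (1 - θ + θ * y) / (3 * θ ^ 3))
        ((1 - θ) ^ 2 * (θ / (1 - θ + θ * x)) / (3 * θ ^ 3)) x :=
      (hlog.const_mul ((1 - θ) ^ 2)).div_const (3 * θ ^ 3)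
    have := (((h1.add h2).add h3).sub h4).add h5
    refine this.congr_deriv ?_
    have hden : 1 - θ * (1 - x) = 1 - θ + θ * x := by ring
    rw [hden]
    have hne : (1 - θ + θ * x) ≠ 0 := ne_of_gt hx0
    field_simp
    ring
  have hcont : IntervalIntegrable (fun x : ℝ =>
      x ^ 2 * (3 - 3 * (θ * (1 - x)) + (θ * (1 - x)) ^ 2) / (3 * (1 - θ * (1 - x))))
      MeasureTheory.volume 0 1 := by
    apply ContinuousOn.intervalIntegrable
    apply ContinuousOn.div (by fun_prop) (by fun_prop)
    intro x hx
    have hx0 := hpos x hx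
    have : 3 * (1 - θ * (1 - x)) = 3 * (1 - θ + θ * x) := by ring
    rw [this]
    positivity
  rw [intervalIntegral.integral_eq_sub_of_hasDerivAt key hcont]
  norm_num
  field_simp
  ring
end

section
/- For the Ali-Mikhail-Haq inverse generator ψ_θ(y) = (θ−1)/(θ − e^y) with θ ∈ [−1,1), θ ≠ 0, the second derivative of y ↦ log(−ψ_θ′(y)) equals 2θe^y/(θ − e^y)². Consequently this function is concave on (0,∞) if and only if θ ≤ 0, and convex on (0,∞) if and only if θ ≥ 0. -/
open Real Set

theorem amh_log_second_deriv_and_convexity (θ : ℝ)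
    (hθ : θ ∈ Set.Ico (-1:ℝ) 1) (hθ0 : θ ≠ 0) :
    (∀ y ∈ Set.Ioi (0:ℝ),
        iteratedDeriv 2
            (fun y : ℝ => Real.log ((1 - θ) * Real.exp y / (θ - Real.exp y) ^ 2)) y
          = 2 * θ * Real.exp y / (θ - Real.exp y) ^ 2) ∧
      (ConcaveOn ℝ (Set.Ioi 0)
          (fun y : ℝ => Real.log ((1 - θ) * Real.exp y / (θ - Real.exp y) ^ 2)) ↔ θ ≤ 0) ∧
      (ConvexOn ℝ (Set.Ioi 0)
          (fun y : ℝ => Real.log ((1 - θ) * Real.exp y / (θ - Real.exp y) ^ 2)) ↔ 0 ≤ θ) := by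
  obtain ⟨hθ1, hθ2⟩ := hθ
  set f : ℝ → ℝ := fun y : ℝ => Real.log ((1 - θ) * Real.exp y / (θ - Real.exp y) ^ 2) with hf
  set g : ℝ → ℝ := fun y : ℝ => Real.log (1 - θ) + y - 2 * Real.log (Real.exp y - θ) with hg
  set h : ℝ → ℝ := fun y : ℝ => 1 - 2 * (Real.exp y / (Real.exp y - θ)) with hh
  set k : ℝ → ℝ := fun y : ℝ => 2 * θ * Real.exp y / (θ - Real.exp y) ^ 2 with hk
  have h1θ : (0:ℝ) < 1 - θ := by linarith
  -- positivity of exp y - θ on Ioi 0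
  have hsub : ∀ y ∈ Set.Ioi (0:ℝ), 0 < Real.exp y - θ := by
    intro y hy
    have h1 : Real.exp 0 < Real.exp y := Real.exp_lt_exp.mpr hy
    rw [Real.exp_zero] at h1
    linarith
  -- f = g on Ioi 0
  have hfg : Set.EqOn f g (Set.Ioi 0) := by
    intro y hy
    have hs := hsub y hy
    have hsq : (θ - Real.exp y) ^ 2 = (Real.exp y - θ) ^ 2 := by ring
    simp only [hf, hg, hsq]
    rw [Real.log_div (by positivity) (by positivity),
      Real.log_mul (by positivity) (Real.exp_ne_zero y), Real.log_exp, Real.log_pow]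
    push_cast
    ring
  -- derivative of g
  have hgd : ∀ y : ℝ, Real.exp y - θ ≠ 0 → HasDerivAt g (h y) y := by
    intro y hne
    have h2 : HasDerivAt (fun y : ℝ => Real.exp y - θ) (Real.exp y) y :=
      (Real.hasDerivAt_exp y).sub_const θ
    have h3 := h2.log hne
    have h4 := h3.const_mul (2:ℝ)
    have h1 : HasDerivAt (fun y : ℝ => Real.log (1 - θ) + y) 1 y :=
      (hasDerivAt_id y).const_add _
    exact h1.sub h4
  -- derivative of h
  have hhd : ∀ y : ℝ, Real.exp y - θ ≠ 0 → HasDerivAt h (k y) y := by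
    intro y hne
    have hq : HasDerivAt (fun y : ℝ => Real.exp y / (Real.exp y - θ))
        ((Real.exp y * (Real.exp y - θ) - Real.exp y * Real.exp y) / (Real.exp y - θ) ^ 2) y :=
      (Real.hasDerivAt_exp y).div ((Real.hasDerivAt_exp y).sub_const θ) hne
    have := (hq.const_mul (2:ℝ)).const_sub 1
    refine this.congr_deriv ?_
    have hsq : (θ - Real.exp y) ^ 2 = (Real.exp y - θ) ^ 2 := by ring
    rw [hk]
    simp only [hsq]
    field_simp
    ring
  -- deriv f = h on Ioi 0
  have hdf : Set.EqOn (deriv f) h (Set.Ioi 0) := by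
    intro y hy
    have hne := (hsub y hy).ne'
    have hev : f =ᶠ[nhds y] g := Filter.eventuallyEq_of_mem (isOpen_Ioi.mem_nhds hy) hfg
    exact ((hgd y hne).congr_of_eventuallyEq hev).deriv
  -- deriv (deriv f) = k on Ioi 0
  have hdf2 : ∀ y ∈ Set.Ioi (0:ℝ), deriv (deriv f) y = k y := by
    intro y hy
    have hne := (hsub y hy).ne'
    have hev : deriv f =ᶠ[nhds y] h := Filter.eventuallyEq_of_mem (isOpen_Ioi.mem_nhds hy) hdf
    exact ((hhd y hne).congr_of_eventuallyEq hev).deriv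
  have hdiff : ∀ y ∈ Set.Ioi (0:ℝ), DifferentiableAt ℝ f y := by
    intro y hy
    have hne := (hsub y hy).ne'
    have hev : f =ᶠ[nhds y] g := Filter.eventuallyEq_of_mem (isOpen_Ioi.mem_nhds hy) hfg
    exact ((hgd y hne).congr_of_eventuallyEq hev).differentiableAt
  have hdiff2 : ∀ y ∈ Set.Ioi (0:ℝ), DifferentiableAt ℝ (deriv f) y := by
    intro y hy
    have hne := (hsub y hy).ne'
    have hev : deriv f =ᶠ[nhds y] h := Filter.eventuallyEq_of_mem (isOpen_Ioi.mem_nhds hy) hdf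
    exact ((hhd y hne).congr_of_eventuallyEq hev).differentiableAt
  have hit : ∀ y ∈ Set.Ioi (0:ℝ), deriv^[2] f y = k y := by
    intro y hy
    have := hdf2 y hy
    simpa using this
  have hcont : ContinuousOn f (Set.Ioi 0) := fun y hy =>
    (hdiff y hy).continuousAt.continuousWithinAt
  have hintr : interior (Set.Ioi (0:ℝ)) = Set.Ioi 0 := interior_Ioi
  -- sign of k
  have hkpos : 0 < θ → ∀ y ∈ Set.Ioi (0:ℝ), 0 < k y := by
    intro hpos y hy
    have hs := hsub y hy
    have he := Real.exp_pos y
    have hd : (0:ℝ) < (θ - Real.exp y) ^ 2 := by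
      have : (θ - Real.exp y) ^ 2 = (Real.exp y - θ) ^ 2 := by ring
      rw [this]; exact pow_pos hs 2
    rw [hk]
    exact div_pos (by nlinarith) hd
  have hkneg : θ < 0 → ∀ y ∈ Set.Ioi (0:ℝ), k y < 0 := by
    intro hneg y hy
    have hd : (0:ℝ) < (θ - Real.exp y) ^ 2 := by
      have hs := hsub y hy
      have : (θ - Real.exp y) ^ 2 = (Real.exp y - θ) ^ 2 := by ring
      rw [this]; exact pow_pos hs 2
    have he := Real.exp_pos y
    have hnum : 2 * θ * Real.exp y < 0 := by nlinarith
    exact div_neg_of_neg_of_pos hnum hd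
  -- strict versions for forward directions
  have hconc : θ ≤ 0 → ConcaveOn ℝ (Set.Ioi 0) f := by
    intro hle
    refine concaveOn_of_deriv2_nonpos (convex_Ioi 0) hcont ?_ ?_ ?_
    · rw [hintr]; exact fun y hy => (hdiff y hy).differentiableWithinAt
    · rw [hintr]; exact fun y hy => (hdiff2 y hy).differentiableWithinAt
    · rw [hintr]
      intro y hy
      rw [hit y hy]
      rcases lt_or_eq_of_le hle with hlt | heq
      · exact le_of_lt (hkneg hlt y hy)
      · exact absurd heq hθ0
  have hconv : 0 ≤ θ → ConvexOn ℝ (Set.Ioi 0) f := by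
    intro hle
    refine convexOn_of_deriv2_nonneg (convex_Ioi 0) hcont ?_ ?_ ?_
    · rw [hintr]; exact fun y hy => (hdiff y hy).differentiableWithinAt
    · rw [hintr]; exact fun y hy => (hdiff2 y hy).differentiableWithinAt
    · rw [hintr]
      intro y hy
      rw [hit y hy]
      rcases lt_or_eq_of_le hle with hlt | heq
      · exact le_of_lt (hkpos hlt y hy)
      · exact absurd heq.symm hθ0
  have hsconv : 0 < θ → StrictConvexOn ℝ (Set.Ioi 0) f := by
    intro hpos
    refine strictConvexOn_of_deriv2_pos (convex_Ioi 0) hcont ?_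
    rw [hintr]
    intro y hy
    rw [hit y hy]
    exact hkpos hpos y hy
  have hsconc : θ < 0 → StrictConcaveOn ℝ (Set.Ioi 0) f := by
    intro hneg
    refine strictConcaveOn_of_deriv2_neg (convex_Ioi 0) hcont ?_
    rw [hintr]
    intro y hy
    rw [hit y hy]
    exact hkneg hneg y hy
  have h1m : (1:ℝ) ∈ Set.Ioi (0:ℝ) := by norm_num
  have h2m : (2:ℝ) ∈ Set.Ioi (0:ℝ) := by norm_num
  refine ⟨?_, ?_, ?_⟩
  · intro y hy
    rw [show (2:ℕ) = 1 + 1 from rfl, iteratedDeriv_succ, iteratedDeriv_one]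
    exact hdf2 y hy
  · constructor
    · intro hcc
      by_contra hcon
      push_neg at hcon
      have hstr := hsconv hcon
      have ha : (0:ℝ) < 1/2 := by norm_num
      have hab : (1/2:ℝ) + 1/2 = 1 := by norm_num
      have hlt := hstr.2 h1m h2m (by norm_num) ha ha hab
      have hge := hcc.2 h1m h2m ha.le ha.le hab
      linarith
    · exact hconc
  · constructor
    · intro hcc
      by_contra hcon
      push_neg at hcon
      have hstr := hsconc hcon
      have ha : (0:ℝ) < 1/2 := by norm_num
      have hab : (1/2:ℝ) + 1/2 = 1 := by norm_num
      have hlt := hstr.2 h1m h2m (by norm_num) ha ha hab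
      have hge := hcc.2 h1m h2m ha.le ha.le hab
      linarith
    · exact hconv
end

section
/- For the Fréchet copula C_{α,β} = α·M + (1−α−β)·Π + β·W with α, β ≥ 0, α + β ≤ 1, where M(u,v) = min(u,v), Π(u,v) = uv, W(u,v) = max(u+v−1, 0), Chatterjee's xi coefficient equals ξ(C_{α,β}) = 6·∫₀¹∫₀¹ (∂₁C_{α,β}(u,v))² du dv − 2 = (α − β)² + αβ. -/
open Real MeasureTheory intervalIntegral

lemma indInt (s : Set ℝ) (hs : MeasurableSet s) :
    IntervalIntegrable (Set.indicator s (fun _ => (1:ℝ))) volume 0 1 := by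
  rw [intervalIntegrable_iff]
  exact (integrableOn_const (by simp [Set.uIoc_of_le])).indicator hs

lemma ind_int_eq (s : Set ℝ) (hs : MeasurableSet s) :
    ∫ u in (0:ℝ)..1, Set.indicator s (fun _ => (1:ℝ)) u
      = (volume (s ∩ Set.Ioc 0 1)).toReal := by
  rw [intervalIntegral.integral_of_le zero_le_one,
    MeasureTheory.integral_indicator hs, Measure.restrict_restrict hs,
    MeasureTheory.setIntegral_const]
  simp
  rfl

lemma int1 (v : ℝ) (h0 : 0 ≤ v) (h1 : v ≤ 1) :
    ∫ u in (0:ℝ)..1, Set.indicator (Set.Iio v) (fun _ => (1:ℝ)) u = v := by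
  rw [ind_int_eq _ measurableSet_Iio]
  have : Set.Iio v ∩ Set.Ioc 0 1 = Set.Ioo 0 v := by
    ext u; simp only [Set.mem_inter_iff, Set.mem_Iio, Set.mem_Ioc, Set.mem_Ioo]
    constructor
    · rintro ⟨a, b, c⟩; exact ⟨b, a⟩
    · rintro ⟨a, b⟩; exact ⟨b, a, by linarith⟩
  rw [this, Real.volume_Ioo, ENNReal.toReal_ofReal (by linarith)]
  ring

lemma int2 (v : ℝ) (h0 : 0 ≤ v) (h1 : v ≤ 1) :
    ∫ u in (0:ℝ)..1, Set.indicator (Set.Ioi (1-v)) (fun _ => (1:ℝ)) u = v := by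
  rw [ind_int_eq _ measurableSet_Ioi]
  have : Set.Ioi (1-v) ∩ Set.Ioc 0 1 = Set.Ioc (1-v) 1 := by
    ext u; simp only [Set.mem_inter_iff, Set.mem_Ioi, Set.mem_Ioc]
    constructor
    · rintro ⟨a, b, c⟩; exact ⟨a, c⟩
    · rintro ⟨a, b⟩; exact ⟨a, by linarith, b⟩
  rw [this, Real.volume_Ioc, ENNReal.toReal_ofReal (by linarith)]
  ring

lemma int3 (v : ℝ) (h0 : 0 ≤ v) (h1 : v ≤ 1) :
    ∫ u in (0:ℝ)..1, Set.indicator (Set.Ioo (1-v) v) (fun _ => (1:ℝ)) u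
      = max (2*v-1) 0 := by
  rw [ind_int_eq _ measurableSet_Ioo]
  have : Set.Ioo (1-v) v ∩ Set.Ioc 0 1 = Set.Ioo (1-v) v := by
    apply Set.inter_eq_left.2
    intro u hu; simp only [Set.mem_Ioo] at hu; exact ⟨by linarith [hu.1], by linarith [hu.2]⟩
  rw [this, Real.volume_Ioo]
  rcases le_total v (1/2) with h | h
  · rw [ENNReal.ofReal_eq_zero.2 (by linarith)]
    simp [max_eq_right (by linarith : 2*v-1 ≤ 0)]
  · rw [ENNReal.toReal_ofReal (by linarith), max_eq_left (by linarith)]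
    ring

lemma maxint : ∫ v in (0:ℝ)..1, max (2*v-1) 0 = 1/4 := by
  have h1 : IntervalIntegrable (fun v => max (2*v-1) 0) volume 0 (1/2) :=
    (Continuous.max (by continuity) continuous_const).intervalIntegrable _ _
  have h2 : IntervalIntegrable (fun v => max (2*v-1) 0) volume (1/2) 1 :=
    (Continuous.max (by continuity) continuous_const).intervalIntegrable _ _
  rw [← intervalIntegral.integral_add_adjacent_intervals h1 h2]
  have e1 : ∫ v in (0:ℝ)..(1/2), max (2*v-1) 0 = 0 := by
    rw [intervalIntegral.integral_congr (g := fun _ => (0:ℝ))]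
    · simp
    · intro v hv
      rw [Set.uIcc_of_le (by norm_num)] at hv
      exact max_eq_right (by linarith [hv.1, hv.2])
  have e2 : ∫ v in (1/2:ℝ)..1, max (2*v-1) 0 = 1/4 := by
    rw [intervalIntegral.integral_congr (g := fun v => 2*v-1)]
    · rw [intervalIntegral.integral_eq_sub_of_hasDerivAt
        (f := fun v => v^2 - v) (f' := fun v => 2*v-1)
        (fun x _ => by
          have h := ((hasDerivAt_pow 2 x).sub (hasDerivAt_id x))
          exact h.congr_deriv (by ring))
        ((by continuity : Continuous fun v : ℝ => 2*v-1).intervalIntegrable _ _)]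
      norm_num
    · intro v hv
      rw [Set.uIcc_of_le (by norm_num)] at hv
      exact max_eq_left (by linarith [hv.1])
  rw [e1, e2]; norm_num
theorem frechet_chatterjee_xi (α β : ℝ) (hα : 0 ≤ α) (hβ : 0 ≤ β)
    (hαβ : α + β ≤ 1) :
    6 * (∫ v in (0:ℝ)..1, ∫ u in (0:ℝ)..1,
        ((α * (if u < v then (1:ℝ) else 0) + (1 - α - β) * v
            + β * (if 1 - v < u then (1:ℝ) else 0)) : ℝ) ^ 2) - 2
      = (α - β) ^ 2 + α * β := by
  set c : ℝ := 1 - α - β with hc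
  have houter : Set.EqOn
      (fun v => ∫ u in (0:ℝ)..1,
        ((α * (if u < v then (1:ℝ) else 0) + (1 - α - β) * v
            + β * (if 1 - v < u then (1:ℝ) else 0)) : ℝ) ^ 2)
      (fun v => (c^2 + 2*α*c + 2*β*c)*v^2 + (α^2+β^2)*v + 2*α*β*max (2*v-1) 0)
      (Set.uIcc (0:ℝ) 1) := by
    intro v hv
    rw [Set.uIcc_of_le zero_le_one] at hv
    obtain ⟨hv0, hv1⟩ := hv
    have key : (fun u => ((α * (if u < v then (1:ℝ) else 0) + (1 - α - β) * v
            + β * (if 1 - v < u then (1:ℝ) else 0)) : ℝ) ^ 2)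
        = fun u => c^2*v^2
            + (α^2+2*α*c*v) * Set.indicator (Set.Iio v) (fun _ => (1:ℝ)) u
            + (β^2+2*β*c*v) * Set.indicator (Set.Ioi (1-v)) (fun _ => (1:ℝ)) u
            + (2*α*β) * Set.indicator (Set.Ioo (1-v) v) (fun _ => (1:ℝ)) u := by
      funext u
      by_cases h1 : u < v <;> by_cases h2 : 1 - v < u <;>
        simp [Set.indicator_apply, Set.mem_Ioo, h1, h2, hc] <;> ring
    show (∫ u in (0:ℝ)..1, _) = _
    rw [key]
    have iA : IntervalIntegrable
        (fun u => (α^2+2*α*c*v) * Set.indicator (Set.Iio v) (fun _ => (1:ℝ)) u)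
        MeasureTheory.volume 0 1 := (indInt _ measurableSet_Iio).const_mul _
    have iB : IntervalIntegrable
        (fun u => (β^2+2*β*c*v) * Set.indicator (Set.Ioi (1-v)) (fun _ => (1:ℝ)) u)
        MeasureTheory.volume 0 1 := (indInt _ measurableSet_Ioi).const_mul _
    have iD : IntervalIntegrable
        (fun u => (2*α*β) * Set.indicator (Set.Ioo (1-v) v) (fun _ => (1:ℝ)) u)
        MeasureTheory.volume 0 1 := (indInt _ measurableSet_Ioo).const_mul _
    rw [intervalIntegral.integral_add ((intervalIntegrable_const.add iA).add iB) iD,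
      intervalIntegral.integral_add (intervalIntegrable_const.add iA) iB,
      intervalIntegral.integral_add intervalIntegrable_const iA,
      intervalIntegral.integral_const, intervalIntegral.integral_const_mul,
      intervalIntegral.integral_const_mul, intervalIntegral.integral_const_mul,
      int1 v hv0 hv1, int2 v hv0 hv1, int3 v hv0 hv1]
    simp; ring
  rw [intervalIntegral.integral_congr houter]
  have I1 : IntervalIntegrable (fun v:ℝ => (c^2 + 2*α*c + 2*β*c)*v^2)
      MeasureTheory.volume 0 1 :=
    ((by continuity : Continuous fun v:ℝ => (c^2 + 2*α*c + 2*β*c)*v^2)).intervalIntegrable _ _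
  have I2 : IntervalIntegrable (fun v:ℝ => (α^2+β^2)*v)
      MeasureTheory.volume 0 1 :=
    ((by continuity : Continuous fun v:ℝ => (α^2+β^2)*v)).intervalIntegrable _ _
  have I3 : IntervalIntegrable (fun v:ℝ => 2*α*β*max (2*v-1) 0)
      MeasureTheory.volume 0 1 :=
    ((continuous_const.mul ((Continuous.max (by continuity) continuous_const))) :
      Continuous fun v:ℝ => 2*α*β*max (2*v-1) 0).intervalIntegrable _ _
  rw [intervalIntegral.integral_add (I1.add I2) I3,
    intervalIntegral.integral_add I1 I2,
    intervalIntegral.integral_const_mul, intervalIntegral.integral_const_mul,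
    intervalIntegral.integral_const_mul, maxint, integral_pow, integral_id]
  norm_num [hc]; ring
end
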